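/- Let R be a semiprime ring, L a Lie ideal of R, and m a positive integer. If L^m is contained in the center Z(R), then L ⊆ Z(R). -/
import Mathlib


/-- The additive subgroup generated by commutators `a*b - b*a` with `a ∈ A`, `b ∈ B`. -/
def commSG (R : Type*) [NonUnitalRing R] (A B : Set R) : AddSubgroup R :=
  AddSubgroup.closure {x | ∃ a ∈ A, ∃ b ∈ B, x = a * b - b * a}

/-- The additive subgroup generated by products `a*b` with `a ∈ A`, `b ∈ B`. -/
def prodSG (R : Type*) [NonUnitalRing R] (A B : Set R) : AddSubgroup R :=
  AddSubgroup.closure {x | ∃ a ∈ A, ∃ b ∈ B, x = a * b}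

/-- `L` is a Lie ideal of `R`. -/
def IsLieIdeal (R : Type*) [NonUnitalRing R] (L : AddSubgroup R) : Prop :=
  ∀ a ∈ L, ∀ r : R, a * r - r * a ∈ L

/-- `sgPow R L n` is the additive subgroup `L^(n+1)` generated by products of `n+1`
elements of `L`. -/
def sgPow (R : Type*) [NonUnitalRing R] (L : AddSubgroup R) : ℕ → AddSubgroup R
  | 0 => L
  | n + 1 => prodSG R (sgPow R L n) L

/-- `R` is a semiprime ring. -/
def IsSemiprimeRing (R : Type*) [NonUnitalRing R] : Prop :=
  ∀ a : R, (∀ x : R, a * x * a = 0) → a = 0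

/-- `R` is a prime ring. -/
def IsPrimeRing (R : Type*) [NonUnitalRing R] : Prop :=
  ∀ a b : R, (∀ x : R, a * x * b = 0) → a = 0 ∨ b = 0

section Aux
variable {R : Type*} [NonUnitalRing R]

private def IsCent (x : R) : Prop := ∀ y, x * y = y * x

private lemma IsCent.neg' {x : R} (h : IsCent x) : IsCent (-x) := by
  intro y; rw [neg_mul, mul_neg, h y]

private lemma isCent_of_neg {x : R} (h : IsCent (-x)) : IsCent x := by
  intro y; have := h y; rw [neg_mul, mul_neg, neg_inj] at this; exact this

private lemma IsCent.sub' {x y : R} (hx : IsCent x) (hy : IsCent y) : IsCent (x - y) := by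
  intro z; rw [sub_mul, mul_sub, hx z, hy z]

private lemma spC (hR : IsSemiprimeRing R) {z : R} (hz : IsCent z) (h2 : z * z = 0) :
    z = 0 := hR z (fun x => by rw [hz x, mul_assoc, h2, mul_zero])

private lemma lemA (hR : IsSemiprimeRing R) {b : R}
    (h : ∀ x, IsCent (b * x - x * b)) : IsCent b := by
  intro x
  have ht : IsCent (b * x - x * b) := h x
  have htb : IsCent ((b * x - x * b) * b) := by
    have h2 := h (x * b)
    have e : b * (x * b) - (x * b) * b = (b * x - x * b) * b := by noncomm_ring
    rwa [e] at h2
  have h2 : (b * x - x * b) * (b * x - x * b) = 0 := by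
    have e1 : (b * x - x * b) * (b * x - x * b)
        = ((b * x - x * b) * b) * x - ((b * x - x * b) * x) * b := by noncomm_ring
    rw [e1, htb x, ht x]; noncomm_ring
  have h0 := spC hR ht h2
  exact sub_eq_zero.mp h0

private lemma lemB (hR : IsSemiprimeRing R) {s b : R}
    (h1 : IsCent (s * b)) (h2 : IsCent (b * s)) : s * b = b * s := by
  have hδ : IsCent (s * b - b * s) := h1.sub' h2
  have key : s * b * b = b * s * b := (h1 b).trans (mul_assoc b s b).symm
  have hvan : ∀ x, (s * b - b * s) * (b * x - x * b) = 0 := by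
    intro x
    have c1 : (s * b) * (x * b) = x * (s * b * b) := by
      calc (s * b) * (x * b) = ((s * b) * x) * b := by noncomm_ring
        _ = (x * (s * b)) * b := by rw [h1 x]
        _ = x * (s * b * b) := by noncomm_ring
    have c2 : (b * s) * (x * b) = x * (b * s * b) := by
      calc (b * s) * (x * b) = ((b * s) * x) * b := by noncomm_ring
        _ = (x * (b * s)) * b := by rw [h2 x]
        _ = x * (b * s * b) := by noncomm_ring
    have e : (s * b - b * s) * (b * x - x * b)
        = ((s * b * b) * x - (s * b) * (x * b)) - ((b * s * b) * x - (b * s) * (x * b)) := by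
      noncomm_ring
    rw [e, c1, c2, key]; abel
  have hδb : IsCent ((s * b - b * s) * b) := by
    intro x
    calc ((s * b - b * s) * b) * x
        = (s * b - b * s) * (x * b) + (s * b - b * s) * (b * x - x * b) := by noncomm_ring
      _ = (s * b - b * s) * (x * b) := by rw [hvan x, add_zero]
      _ = ((s * b - b * s) * x) * b := by noncomm_ring
      _ = (x * (s * b - b * s)) * b := by rw [hδ x]
      _ = x * ((s * b - b * s) * b) := by noncomm_ring
  have hδ2 : (s * b - b * s) * (s * b - b * s) = 0 := by
    have c3 : (s * b - b * s) * (s * b) = s * ((s * b - b * s) * b) := by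
      calc (s * b - b * s) * (s * b) = ((s * b - b * s) * s) * b := by noncomm_ring
        _ = (s * (s * b - b * s)) * b := by rw [hδ s]
        _ = s * ((s * b - b * s) * b) := by noncomm_ring
    have c4 : (s * b - b * s) * (b * s) = ((s * b - b * s) * b) * s := by noncomm_ring
    calc (s * b - b * s) * (s * b - b * s)
        = (s * b - b * s) * (s * b) - (s * b - b * s) * (b * s) := by noncomm_ring
      _ = s * ((s * b - b * s) * b) - ((s * b - b * s) * b) * s := by rw [c3, c4]
      _ = 0 := by rw [hδb s]; abel
  have h0 := spC hR hδ hδ2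
  exact sub_eq_zero.mp h0

end Aux

section Core
variable {R : Type*} [NonUnitalRing R]

private lemma killer (hR : IsSemiprimeRing R) {A B P E : R}
    (hBC : IsCent B) (hBP : B * P = 0) (hAPE : A * P = -(B * E)) : A * P = 0 := by
  apply hR; intro t
  calc A * P * t * (A * P) = A * P * t * (-(B * E)) := congrArg (fun z => A * P * t * z) hAPE
    _ = -((A * P * t * B) * E) := by rw [mul_neg, ← mul_assoc]
    _ = -((B * (A * P * t)) * E) := by rw [← hBC (A * P * t)]
    _ = -((((B * A) * P) * t) * E) := by rw [← mul_assoc, ← mul_assoc]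
    _ = -((((A * B) * P) * t) * E) := by rw [hBC A]
    _ = -(((A * (B * P)) * t) * E) := by rw [mul_assoc A B P]
    _ = 0 := by rw [hBP, mul_zero, zero_mul, zero_mul, neg_zero]

private lemma core (hR : IsSemiprimeRing R) {L : AddSubgroup R} (hL : IsLieIdeal R L)
    {s a b : R} (hs1 : ∀ c ∈ L, IsCent (s * c)) (hs2 : ∀ c ∈ L, IsCent (c * s))
    (ha : a ∈ L) (hb : b ∈ L) : IsCent (s * a * b) := by
  have hc : ∀ c ∈ L, s * c = c * s := fun c hcL => lemB hR (hs1 c hcL) (hs2 c hcL)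
  have hdc_eq : ∀ y, ∀ c ∈ L, (s * y - y * s) * c = -(s * (c * y - y * c)) := by
    intro y c hcL
    have e2 : (y * s) * c = (s * c) * y := (mul_assoc y s c).trans (hs1 c hcL y).symm
    calc (s * y - y * s) * c = (s * y) * c - (y * s) * c := by noncomm_ring
      _ = (s * y) * c - (s * c) * y := by rw [e2]
      _ = -(s * (c * y - y * c)) := by noncomm_ring
  have hd1 : ∀ y, ∀ c ∈ L, IsCent ((s * y - y * s) * c) := by
    intro y c hcL
    rw [hdc_eq y c hcL]
    exact (hs1 _ (hL c hcL y)).neg'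
  have hd2 : ∀ y, ∀ c ∈ L, IsCent (c * (s * y - y * s)) := by
    intro y c hcL
    have e : c * (s * y - y * s) = -((c * y - y * c) * s) := by
      calc c * (s * y - y * s) = (c * s) * y - (c * y) * s := by noncomm_ring
        _ = (y * (c * s)) - (c * y) * s := by rw [hs2 c hcL y]
        _ = -((c * y - y * c) * s) := by noncomm_ring
    rw [e]
    exact (hs2 _ (hL c hcL y)).neg'
  have hd3 : ∀ y, ∀ c ∈ L, (s * y - y * s) * c = c * (s * y - y * s) :=
    fun y c hcL => lemB hR (hd1 y c hcL) (hd2 y c hcL)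
  have hsa := hs1 a ha
  apply lemA hR
  intro x
  -- abbreviate d := s*x - x*s (kept explicit)
  have hdcc : ∀ c ∈ L, IsCent (((s * x - x * s) * c) * c) := by
    intro c hcL
    have hcs := hc c hcL
    have e : s * (x * c) - (x * c) * s = (s * x - x * s) * c := by
      calc s * (x * c) - (x * c) * s = (s * x) * c - x * (c * s) := by noncomm_ring
        _ = (s * x) * c - x * (s * c) := by rw [hcs]
        _ = (s * x - x * s) * c := by noncomm_ring
    have h1 := hd1 (x * c) c hcL
    rwa [e] at h1
  have V2 : ∀ c ∈ L, ∀ y, ((s * x - x * s) * c) * (c * y - y * c) = 0 := by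
    intro c hcL y
    have hz := hd1 x c hcL
    have hzc := hdcc c hcL
    calc ((s * x - x * s) * c) * (c * y - y * c)
        = (((s * x - x * s) * c) * c) * y - (((s * x - x * s) * c) * y) * c := by noncomm_ring
      _ = y * (((s * x - x * s) * c) * c) - (y * ((s * x - x * s) * c)) * c := by
          rw [hzc y, hz y]
      _ = 0 := by noncomm_ring
  have V2' : ∀ y, ((s * x - x * s) * a) * (b * y - y * b)
      = -(((s * x - x * s) * b) * (a * y - y * a)) := by
    intro y
    have h0 := V2 (a + b) (L.add_mem ha hb) y
    have e : ((s * x - x * s) * (a + b)) * ((a + b) * y - y * (a + b))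
        = ((s * x - x * s) * a) * (a * y - y * a) + ((s * x - x * s) * a) * (b * y - y * b)
          + ((s * x - x * s) * b) * (a * y - y * a)
          + ((s * x - x * s) * b) * (b * y - y * b) := by noncomm_ring
    rw [e, V2 a ha y, V2 b hb y, zero_add, add_zero] at h0
    exact eq_neg_of_add_eq_zero_left h0
  have θ0 : ∀ y, ((s * x - x * s) * a) * (b * y - y * b) = 0 :=
    fun y => killer hR (hd1 x b hb) (V2 b hb y) (V2' y)
  have hdab : IsCent (((s * x - x * s) * a) * b) := by
    intro y
    have hz := hd1 x a ha
    have e : ((((s * x - x * s) * a) * b) * y) - y * (((s * x - x * s) * a) * b)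
        = ((s * x - x * s) * a) * (b * y - y * b) := by
      calc ((((s * x - x * s) * a) * b) * y) - y * (((s * x - x * s) * a) * b)
          = ((s * x - x * s) * a) * (b * y) - (y * ((s * x - x * s) * a)) * b := by noncomm_ring
        _ = ((s * x - x * s) * a) * (b * y) - (((s * x - x * s) * a) * y) * b := by rw [hz y]
        _ = ((s * x - x * s) * a) * (b * y - y * b) := by noncomm_ring
    exact sub_eq_zero.mp (e.trans (θ0 y))
  have h5 : s * (b * x - x * b) = -((s * x - x * s) * b) := by
    rw [hdc_eq x b hb, neg_neg]
  have idt : s * a * b * x - x * (s * a * b) = -(((s * x - x * s) * a) * b) := by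
    calc s * a * b * x - x * (s * a * b)
        = (s * a) * (b * x) - (x * (s * a)) * b := by noncomm_ring
      _ = (s * a) * (b * x) - ((s * a) * x) * b := by rw [← hsa x]
      _ = (s * a) * (b * x - x * b) := by noncomm_ring
      _ = (a * s) * (b * x - x * b) := by rw [hc a ha]
      _ = a * (s * (b * x - x * b)) := by rw [mul_assoc]
      _ = a * (-((s * x - x * s) * b)) := by rw [h5]
      _ = -((a * (s * x - x * s)) * b) := by noncomm_ring
      _ = -(((s * x - x * s) * a) * b) := by rw [← hd3 x a ha]
  rw [idt]
  exact hdab.neg'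

end Core

section MainL
variable {R : Type*} [NonUnitalRing R]

private lemma mainLemma (hR : IsSemiprimeRing R) {N : AddSubgroup R}
    (hNl : ∀ t ∈ N, ∀ x : R, t * x - x * t ∈ N)
    (hN2 : ∀ p ∈ N, ∀ q ∈ N, IsCent (p * q)) :
    ∀ a ∈ N, IsCent a := by
  intro a haN
  have haa : IsCent (a * a) := hN2 a haN a haN
  have hstep2 : ∀ y : R, a * (a * y - y * a) + (a * y - y * a) * a = 0 := by
    intro y
    calc a * (a * y - y * a) + (a * y - y * a) * a
        = (a * a) * y - y * (a * a) := by noncomm_ring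
      _ = 0 := by rw [haa y, sub_self]
  have hca_eq : ∀ y : R, (a * y - y * a) * a = -(a * (a * y - y * a)) := by
    intro y
    have h := hstep2 y
    rw [add_comm] at h
    exact eq_neg_of_add_eq_zero_left h
  -- a*a*(a*y - y*a) is central
  have haac : ∀ y : R, IsCent (a * a * (a * y - y * a)) := by
    intro y
    have m1 : (a * y - y * a) * a ∈ N := by
      have h1 := hNl a haN (y * a)
      have e : a * (y * a) - (y * a) * a = (a * y - y * a) * a := by noncomm_ring
      rwa [e] at h1
    have h1 : IsCent (a * ((a * y - y * a) * a)) := hN2 a haN _ m1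
    have e3 : a * ((a * y - y * a) * a) = -(a * a * (a * y - y * a)) := by
      rw [hca_eq y]; noncomm_ring
    rw [e3] at h1
    exact isCent_of_neg h1
  have hcube_id : ∀ y : R, a * a * a * y - y * (a * a * a) = a * a * (a * y - y * a) := by
    intro y
    calc a * a * a * y - y * (a * a * a)
        = a * a * (a * y) - (y * (a * a)) * a := by noncomm_ring
      _ = a * a * (a * y) - ((a * a) * y) * a := by rw [← haa y]
      _ = a * a * (a * y - y * a) := by noncomm_ring
  have ha3 : IsCent (a * a * a) := by
    apply lemA hR
    intro y
    rw [hcube_id y]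
    exact haac y
  have haac0 : ∀ y : R, a * a * (a * y - y * a) = 0 := by
    intro y
    rw [← hcube_id y, ha3 y, sub_self]
  -- now fix x, prove the commutator vanishes
  intro x
  have hcN : a * x - x * a ∈ N := hNl a haN x
  have hac : IsCent (a * (a * x - x * a)) := hN2 a haN _ hcN
  have hz0 : a * (a * x - x * a) = 0 := by
    apply spC hR hac
    calc a * (a * x - x * a) * (a * (a * x - x * a))
        = a * (((a * x - x * a) * a) * (a * x - x * a)) := by noncomm_ring
      _ = a * ((-(a * (a * x - x * a))) * (a * x - x * a)) := by rw [hca_eq x]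
      _ = -((a * a * (a * x - x * a)) * (a * x - x * a)) := by noncomm_ring
      _ = 0 := by rw [haac0 x, zero_mul, neg_zero]
  have hca0 : (a * x - x * a) * a = 0 := by rw [hca_eq x, hz0, neg_zero]
  have hcc_eq : (a * x - x * a) * (a * x - x * a) = a * (x * (a * x - x * a)) := by
    calc (a * x - x * a) * (a * x - x * a)
        = a * (x * (a * x - x * a)) - x * (a * (a * x - x * a)) := by noncomm_ring
      _ = a * (x * (a * x - x * a)) := by rw [hz0, mul_zero, sub_zero]
  have hcc : IsCent ((a * x - x * a) * (a * x - x * a)) := hN2 _ hcN _ hcN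
  have hcc0 : (a * x - x * a) * (a * x - x * a) = 0 := by
    apply spC hR hcc
    calc (a * x - x * a) * (a * x - x * a) * ((a * x - x * a) * (a * x - x * a))
        = (a * x - x * a) * (a * x - x * a) * (a * (x * (a * x - x * a))) := by rw [hcc_eq]
      _ = ((a * x - x * a) * (((a * x - x * a) * a) * (x * (a * x - x * a)))) := by noncomm_ring
      _ = 0 := by rw [hca0, zero_mul, mul_zero]
  have hcxc : ∀ y : R, IsCent ((a * x - x * a) * y * (a * x - x * a)) := by
    intro y
    have hm := hNl _ hcN y
    have h1 : IsCent ((a * x - x * a) * ((a * x - x * a) * y - y * (a * x - x * a))) :=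
      hN2 _ hcN _ hm
    have e : (a * x - x * a) * ((a * x - x * a) * y - y * (a * x - x * a))
        = ((a * x - x * a) * (a * x - x * a)) * y - (a * x - x * a) * y * (a * x - x * a) := by
      noncomm_ring
    rw [e, hcc0, zero_mul, zero_sub] at h1
    exact isCent_of_neg h1
  have hc0 : a * x - x * a = 0 := by
    apply hR
    intro y
    apply spC hR (hcxc y)
    calc (a * x - x * a) * y * (a * x - x * a) * ((a * x - x * a) * y * (a * x - x * a))
        = (a * x - x * a) * y * (((a * x - x * a) * (a * x - x * a)) * (y * (a * x - x * a))) := by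
          noncomm_ring
      _ = 0 := by rw [hcc0, zero_mul, mul_zero]
  exact sub_eq_zero.mp hc0

end MainL

section Plumb
variable {R : Type*} [NonUnitalRing R]

private def cSG (R : Type*) [NonUnitalRing R] : AddSubgroup R where
  carrier := {x | ∀ y, x * y = y * x}
  zero_mem' := by intro y; rw [zero_mul, mul_zero]
  add_mem' := by intro a b ha hb y; rw [add_mul, mul_add, ha y, hb y]
  neg_mem' := by intro a ha y; rw [neg_mul, mul_neg, ha y]

private lemma mem_cSG {x : R} : x ∈ cSG R ↔ IsCent x := Iff.rfl

private def lmulPre (b : R) (K : AddSubgroup R) : AddSubgroup R where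
  carrier := {t | b * t ∈ K}
  zero_mem' := by simp only [Set.mem_setOf_eq, mul_zero]; exact K.zero_mem
  add_mem' := by intro x y hx hy; simp only [Set.mem_setOf_eq, mul_add]; exact K.add_mem hx hy
  neg_mem' := by intro x hx; simp only [Set.mem_setOf_eq, mul_neg]; exact K.neg_mem hx

private def rmulPre (S : Set R) (K : AddSubgroup R) : AddSubgroup R where
  carrier := {t | ∀ b ∈ S, t * b ∈ K}
  zero_mem' := by intro b _; rw [zero_mul]; exact K.zero_mem
  add_mem' := by intro x y hx hy b hb; rw [add_mul]; exact K.add_mem (hx b hb) (hy b hb)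
  neg_mem' := by intro x hx b hb; rw [neg_mul]; exact K.neg_mem (hx b hb)

private def liePre (K : AddSubgroup R) : AddSubgroup R where
  carrier := {t | ∀ x : R, t * x - x * t ∈ K}
  zero_mem' := by intro x; rw [zero_mul, mul_zero, sub_zero]; exact K.zero_mem
  add_mem' := by
    intro p q hp hq x
    have e : (p + q) * x - x * (p + q) = (p * x - x * p) + (q * x - x * q) := by noncomm_ring
    rw [e]; exact K.add_mem (hp x) (hq x)
  neg_mem' := by
    intro p hp x
    have e : (-p) * x - x * (-p) = -(p * x - x * p) := by noncomm_ring
    rw [e]; exact K.neg_mem (hp x)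

private lemma mem_prodSG_of {A B : Set R} {a b : R} (ha : a ∈ A) (hb : b ∈ B) :
    a * b ∈ prodSG R A B :=
  AddSubgroup.subset_closure ⟨a, ha, b, hb, rfl⟩

variable {L : AddSubgroup R}

private lemma sgR1 {k : ℕ} {s b : R} (hs : s ∈ sgPow R L k) (hb : b ∈ L) :
    s * b ∈ sgPow R L (k + 1) :=
  mem_prodSG_of hs hb

private lemma sgR2 : ∀ k : ℕ, ∀ b ∈ L, ∀ s ∈ sgPow R L k, b * s ∈ sgPow R L (k + 1)
  | 0 => fun b hb s hs => mem_prodSG_of hb hs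
  | (k + 1) => fun b hb s hs => by
    have hle : sgPow R L (k + 1) ≤ lmulPre b (sgPow R L (k + 2)) := by
      refine (AddSubgroup.closure_le _).mpr ?_
      rintro _ ⟨u, hu, c, hc, rfl⟩
      show b * (u * c) ∈ sgPow R L (k + 2)
      rw [← mul_assoc]
      exact sgR1 (sgR2 k b hb u hu) hc
    exact hle hs

private lemma sgLie (hL : IsLieIdeal R L) :
    ∀ k : ℕ, ∀ t ∈ sgPow R L k, ∀ x : R, t * x - x * t ∈ sgPow R L k
  | 0 => hL
  | (k + 1) => fun t ht x => by
    have hle : sgPow R L (k + 1) ≤ liePre (sgPow R L (k + 1)) := by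
      refine (AddSubgroup.closure_le _).mpr ?_
      rintro _ ⟨u, hu, c, hc, rfl⟩ y
      show (u * c) * y - y * (u * c) ∈ sgPow R L (k + 1)
      have e : (u * c) * y - y * (u * c) = u * (c * y - y * c) + (u * y - y * u) * c := by
        noncomm_ring
      rw [e]
      exact AddSubgroup.add_mem _ (mem_prodSG_of hu (hL c hc y))
        (sgR1 (sgLie hL k u hu y) hc)
    exact hle ht x

private lemma sgR5 : ∀ k j : ℕ, ∀ p ∈ sgPow R L j, ∀ q ∈ sgPow R L k,
    p * q ∈ sgPow R L (j + k + 1)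
  | 0 => fun j p hp q hq => sgR1 hp hq
  | (k + 1) => fun j p hp q hq => by
    have hle : sgPow R L (k + 1) ≤ lmulPre p (sgPow R L (j + (k + 1) + 1)) := by
      refine (AddSubgroup.closure_le _).mpr ?_
      rintro _ ⟨u, hu, c, hc, rfl⟩
      show p * (u * c) ∈ sgPow R L (j + (k + 1) + 1)
      rw [← mul_assoc]
      exact sgR1 (sgR5 k j p hp u hu) hc
    exact hle hq

end Plumb

section UpDown
variable {R : Type*} [NonUnitalRing R] {L : AddSubgroup R}

private lemma up0 (hLc : sgPow R L 0 ≤ cSG R) : sgPow R L 1 ≤ cSG R := by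
  refine (AddSubgroup.closure_le _).mpr ?_
  rintro _ ⟨p, hp, q, hq, rfl⟩
  intro y
  calc (p * q) * y = p * (q * y) := by rw [mul_assoc]
    _ = p * (y * q) := by rw [hLc hq y]
    _ = (p * y) * q := by rw [mul_assoc]
    _ = (y * p) * q := by rw [hLc hp y]
    _ = y * (p * q) := by rw [mul_assoc]

private lemma up1 (hR : IsSemiprimeRing R) (hL : IsLieIdeal R L) (k : ℕ)
    (hk : sgPow R L (k + 1) ≤ cSG R) : sgPow R L (k + 2) ≤ cSG R := by
  have hK : sgPow R L (k + 1) ≤ rmulPre (L : Set R) (cSG R) := by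
    refine (AddSubgroup.closure_le _).mpr ?_
    rintro _ ⟨s, hs, a, ha, rfl⟩ b hb
    exact core hR hL (fun c hc => hk (sgR1 hs hc)) (fun c hc => hk (sgR2 k c hc s hs)) ha hb
  refine (AddSubgroup.closure_le _).mpr ?_
  rintro _ ⟨t, ht, b, hb, rfl⟩
  exact hK ht b hb

private lemma upAll (hR : IsSemiprimeRing R) (hL : IsLieIdeal R L) :
    ∀ k : ℕ, sgPow R L k ≤ cSG R → sgPow R L (k + 1) ≤ cSG R
  | 0 => up0
  | (k + 1) => up1 hR hL k

private lemma downStep (hR : IsSemiprimeRing R) (hL : IsLieIdeal R L) (k : ℕ)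
    (hup : ∀ j, k + 1 ≤ j → sgPow R L j ≤ cSG R) : sgPow R L k ≤ cSG R := by
  intro t ht
  exact mainLemma hR (sgLie hL k)
    (fun p hp q hq => hup (k + k + 1) (by omega) (sgR5 k k p hp q hq)) t ht

end UpDown


/-- in a semiprime ring, if L^m ⊆ Z(R) then L ⊆ Z(R). -/
theorem stmt8 (R : Type*) [NonUnitalRing R] (hR : IsSemiprimeRing R)
    (L : AddSubgroup R) (hL : IsLieIdeal R L) (m : ℕ) (hm : 1 ≤ m)
    (h : ∀ x ∈ sgPow R L (m - 1), ∀ y : R, x * y = y * x) :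
    ∀ x ∈ L, ∀ y : R, x * y = y * x := by
  have hbase : sgPow R L (m - 1) ≤ cSG R := fun x hx => h x hx
  have tail : ∀ t : ℕ, sgPow R L (m - 1 + t) ≤ cSG R := by
    intro t
    induction t with
    | zero => exact hbase
    | succ n ih => exact upAll hR hL (m - 1 + n) ih
  have allBig : ∀ j, m - 1 ≤ j → sgPow R L j ≤ cSG R := by
    intro j hj
    have := tail (j - (m - 1))
    rwa [Nat.add_sub_cancel' hj] at this
  have down' : ∀ i j, m - 1 - i ≤ j → sgPow R L j ≤ cSG R := by
    intro i
    induction i with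
    | zero => intro j hj; exact allBig j hj
    | succ n ih =>
      intro j hj
      by_cases hc : m - 1 - n ≤ j
      · exact ih j hc
      · exact downStep hR hL j (fun j' hj' => ih j' (by omega))
  intro x hx y
  exact down' (m - 1) 0 (by omega) hx y
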